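/- Let L be an n×n invertible SDDM matrix and let S ⊆ [n] be a nonempty subset of indices. Then the principal submatrix L_{S,S} is invertible, and for all i, j ∈ S, ((L_{S,S})⁻¹)_{ij} ≤ (L⁻¹)_{ij}. Consequently, when L has integer entries in [-U, U], the probability distances satisfy D_L(i, j) ≤ D_{L_{S,S}}(i, j) for all i, j ∈ S. -/

import Mathlib

open Finset Matrix

/-- Swap lemma for off-diagonal double sums. -/
lemma offdiag_sum_comm {m : Type*} [Fintype m] [DecidableEq m] (g : m → m → ℝ) :
    ∑ i, ∑ k ∈ Finset.univ.erase i, g i k = ∑ k, ∑ i ∈ Finset.univ.erase k, g i k := by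
  have h : ∀ (f : m → m → ℝ) (a : m), ∑ k ∈ Finset.univ.erase a, f a k
      = ∑ k, if k ≠ a then f a k else 0 := by
    intro f a
    rw [← Finset.filter_ne' Finset.univ a, Finset.sum_filter]
  simp_rw [h]
  rw [Finset.sum_comm]
  apply Finset.sum_congr rfl
  intro k _
  rw [h (fun a b => g b a) k]
  apply Finset.sum_congr rfl
  intro i _
  simp [ne_comm]

/-- A symmetric (weakly) diagonally dominant real matrix with nonnegative diagonal is PSD. -/
lemma sddm_posSemidef {m : Type*} [Fintype m] [DecidableEq m] (M : Matrix m m ℝ)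
    (hsymm : M.IsSymm)
    (hdd : ∀ i, ∑ j ∈ Finset.univ.filter (fun j => j ≠ i), |M i j| ≤ M i i) :
    M.PosSemidef := by
  rw [Matrix.posSemidef_iff_dotProduct_mulVec]
  constructor
  · rw [Matrix.IsHermitian, Matrix.conjTranspose_eq_transpose_of_trivial]; exact hsymm
  · intro x
    rw [star_trivial]
    have expand : x ⬝ᵥ (M *ᵥ x) = ∑ i, ∑ k, x i * (M i k * x k) := by
      simp [dotProduct, Matrix.mulVec, Finset.mul_sum]
    rw [expand]
    have hsplit : ∀ i, ∑ k, x i * (M i k * x k)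
        = x i * (M i i * x i) + ∑ k ∈ Finset.univ.erase i, x i * (M i k * x k) := by
      intro i
      exact (Finset.add_sum_erase Finset.univ (fun k => x i * (M i k * x k)) (Finset.mem_univ i)).symm
    simp_rw [hsplit]
    rw [Finset.sum_add_distrib]
    have hbound : ∀ i k, i ≠ k → -( |M i k| * (x i ^ 2 + x k ^ 2) / 2) ≤ x i * (M i k * x k) := by
      intro i k _
      have h1 : |x i * (M i k * x k)| ≤ |M i k| * (x i ^ 2 + x k ^ 2) / 2 := by
        rw [abs_mul, abs_mul]
        rw [show |x i| * (|M i k| * |x k|) = |M i k| * (|x i| * |x k|) by ring]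
        rw [mul_div_assoc]
        apply mul_le_mul_of_nonneg_left _ (abs_nonneg _)
        rw [le_div_iff₀ (by norm_num : (0:ℝ) < 2)]
        have := two_mul_le_add_sq |x i| |x k|
        calc |x i| * |x k| * 2 = 2 * |x i| * |x k| := by ring
          _ ≤ |x i| ^ 2 + |x k| ^ 2 := two_mul_le_add_sq _ _
          _ = x i ^ 2 + x k ^ 2 := by rw [sq_abs, sq_abs]
      linarith [neg_abs_le (x i * (M i k * x k))]
    have hofflb : -(∑ i, (∑ k ∈ Finset.univ.erase i, |M i k|) * x i ^ 2)
        ≤ ∑ i, ∑ k ∈ Finset.univ.erase i, x i * (M i k * x k) := by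
      have step1 : ∀ i, -(∑ k ∈ Finset.univ.erase i, |M i k| * (x i ^ 2 + x k ^ 2) / 2)
          ≤ ∑ k ∈ Finset.univ.erase i, x i * (M i k * x k) := by
        intro i
        rw [← Finset.sum_neg_distrib]
        apply Finset.sum_le_sum
        intro k hk
        exact hbound i k (fun h => (Finset.mem_erase.mp hk).1 h.symm) 
      have step2 : ∑ i, ∑ k ∈ Finset.univ.erase i, |M i k| * (x i ^ 2 + x k ^ 2) / 2
          = ∑ i, (∑ k ∈ Finset.univ.erase i, |M i k|) * x i ^ 2 := by
        have e1 : ∀ i k, |M i k| * (x i ^ 2 + x k ^ 2) / 2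
            = |M i k| * x i ^ 2 / 2 + |M i k| * x k ^ 2 / 2 := by intro i k; ring
        simp_rw [e1, Finset.sum_add_distrib]
        rw [offdiag_sum_comm (fun i k => |M i k| * x k ^ 2 / 2)]
        have e2 : ∀ k, ∑ i ∈ Finset.univ.erase k, |M i k| * x k ^ 2 / 2
            = ∑ i ∈ Finset.univ.erase k, |M k i| * x k ^ 2 / 2 := by
          intro k
          apply Finset.sum_congr rfl
          intro i _
          rw [show M i k = M k i from (Matrix.IsSymm.apply hsymm i k).symm]
        simp_rw [e2]
        rw [← Finset.sum_add_distrib]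
        apply Finset.sum_congr rfl
        intro i _
        rw [Finset.sum_mul, ← Finset.sum_add_distrib]
        apply Finset.sum_congr rfl
        intro k _
        ring
      calc -(∑ i, (∑ k ∈ Finset.univ.erase i, |M i k|) * x i ^ 2)
          = -(∑ i, ∑ k ∈ Finset.univ.erase i, |M i k| * (x i ^ 2 + x k ^ 2) / 2) := by rw [step2]
        _ = ∑ i, -(∑ k ∈ Finset.univ.erase i, |M i k| * (x i ^ 2 + x k ^ 2) / 2) := by
            rw [Finset.sum_neg_distrib]
        _ ≤ _ := Finset.sum_le_sum fun i _ => step1 i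
    have hdiag' : ∀ i, (∑ k ∈ Finset.univ.erase i, |M i k|) * x i ^ 2 ≤ x i * (M i i * x i) := by
      intro i
      have : ∑ k ∈ Finset.univ.erase i, |M i k| ≤ M i i := by
        rw [← Finset.filter_ne' Finset.univ i]
        exact hdd i
      calc (∑ k ∈ Finset.univ.erase i, |M i k|) * x i ^ 2 ≤ M i i * x i ^ 2 :=
            mul_le_mul_of_nonneg_right this (sq_nonneg _)
        _ = x i * (M i i * x i) := by ring
    have := Finset.sum_le_sum fun i (_ : i ∈ Finset.univ) => hdiag' i
    linarith

open Finset Matrix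

/-- The inverse of a positive definite matrix with nonpositive off-diagonal entries
(a Stieltjes matrix) is entrywise nonnegative. -/
lemma stieltjes_inv_nonneg {m : Type*} [Fintype m] [DecidableEq m] (M : Matrix m m ℝ)
    (hPD : M.PosDef) (hoff : ∀ i k, i ≠ k → M i k ≤ 0) :
    ∀ i j, 0 ≤ M⁻¹ i j := by
  intro i j
  have hdet : IsUnit M.det := hPD.det_pos.ne'.isUnit
  set x : m → ℝ := fun i => M⁻¹ i j with hxdef
  have hMx : M *ᵥ x = fun i => if i = j then 1 else 0 := by
    funext a
    have h1 : (M *ᵥ x) a = (M * M⁻¹) a j := by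
      simp [Matrix.mulVec, Matrix.mul_apply, dotProduct, hxdef]
    rw [h1, Matrix.mul_nonsing_inv _ hdet, Matrix.one_apply]
  set p : m → ℝ := fun k => max (x k) 0 with hpdef
  set q : m → ℝ := fun k => max (-(x k)) 0 with hqdef
  have hp0 : ∀ k, 0 ≤ p k := fun k => le_max_right _ _
  have hq0 : ∀ k, 0 ≤ q k := fun k => le_max_right _ _
  have hx_eq : ∀ k, x k = p k - q k := fun k =>
    (max_zero_sub_max_neg_zero_eq_self (x k)).symm
  have hpq : ∀ k, q k * p k = 0 := by
    intro k
    rcases le_total (x k) 0 with h | h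
    · have : p k = 0 := max_eq_right h
      rw [this, mul_zero]
    · have : q k = 0 := max_eq_right (neg_nonpos.mpr h)
      rw [this, zero_mul]
  have hq_zero : q = 0 := by
    by_contra hq
    have hpos : 0 < q ⬝ᵥ (M *ᵥ q) := by
      have := hPD.dotProduct_mulVec_pos hq
      rwa [star_trivial] at this
    have hqj : q ⬝ᵥ (M *ᵥ x) = q j := by
      rw [hMx]
      simp [dotProduct, mul_ite]
    have hexp : ∀ (v : m → ℝ), q ⬝ᵥ (M *ᵥ v) = ∑ a, ∑ k, q a * (M a k * v k) := by
      intro v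
      simp [dotProduct, Matrix.mulVec, Finset.mul_sum]
    have hqMp : ∑ a, ∑ k, q a * (M a k * p k) ≤ 0 := by
      apply Finset.sum_nonpos
      intro a _
      apply Finset.sum_nonpos
      intro k _
      rcases eq_or_ne a k with rfl | hak
      · rw [show q a * (M a a * p a) = M a a * (q a * p a) by ring, hpq a, mul_zero]
      · exact mul_nonpos_of_nonneg_of_nonpos (hq0 a)
          (mul_nonpos_of_nonpos_of_nonneg (hoff a k hak) (hp0 k))
    have hsplit : q ⬝ᵥ (M *ᵥ x) = (∑ a, ∑ k, q a * (M a k * p k)) - q ⬝ᵥ (M *ᵥ q) := by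
      rw [hexp x, hexp q, ← Finset.sum_sub_distrib]
      apply Finset.sum_congr rfl
      intro a _
      rw [← Finset.sum_sub_distrib]
      apply Finset.sum_congr rfl
      intro k _
      rw [hx_eq k]
      ring
    have : q j < 0 := by
      rw [← hqj, hsplit]
      linarith
    exact absurd this (not_lt.mpr (hq0 j))
  have : q i = 0 := by rw [hq_zero]; rfl
  have hxi : -(x i) ≤ 0 := by
    have h := le_max_left (-(x i)) 0
    rw [show max (-(x i)) 0 = q i from rfl, this] at h
    exact h
  simpa [hxdef] using neg_nonpos.mp hxi

lemma sum_extend_finset {n : ℕ} (S : Finset (Fin n)) (f : Fin n → ℝ)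
    (y : {x // x ∈ S} → ℝ) :
    ∑ k, f k * (if h : k ∈ S then y ⟨k, h⟩ else 0) = ∑ a : {x // x ∈ S}, f ↑a * y a := by
  rw [Finset.univ_eq_attach,
    ← Finset.sum_subset (Finset.subset_univ S)
      (fun k _ hk => by rw [dif_neg hk, mul_zero]),
    ← Finset.sum_attach S (fun k => f k * (if h : k ∈ S then y ⟨k, h⟩ else 0))]
  apply Finset.sum_congr rfl
  intro a _
  rw [dif_pos a.2]


/-- For an `n × n` invertible SDDM matrix `L` (with integer entries in
`[-U, U]`, `U ≥ 2`, `n ≥ 2`) and a nonempty subset `S ⊆ [n]`, the principal submatrix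
`L_{S,S}` is invertible, its inverse is entrywise dominated by `L⁻¹`
(`((L_{S,S})⁻¹)ᵢⱼ ≤ (L⁻¹)ᵢⱼ` for `i, j ∈ S`), and consequently the probability distances
satisfy `D_L(i, j) ≤ D_{L_{S,S}}(i, j)`; by the characterization
`D_M(i, j) ≤ d ↔ (M⁻¹)ᵢⱼ ≥ (nU)^{2-d}`, the latter reads: for every `d`, if
`((L_{S,S})⁻¹)ᵢⱼ ≥ (nU)^{2-d}` then `(L⁻¹)ᵢⱼ ≥ (nU)^{2-d}`. -/
theorem sddm_submatrix_inv_monotone {n : ℕ} (hn : 2 ≤ n) (U : ℕ) (hU : 2 ≤ U)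
    (L : Matrix (Fin n) (Fin n) ℝ)
    (hsymm : L.IsSymm)
    (hoff : ∀ i j, i ≠ j → L i j ≤ 0)
    (hdiag : ∀ i, 0 < L i i)
    (hdd : ∀ i, ∑ j ∈ Finset.univ.filter (fun j => j ≠ i), |L i j| ≤ L i i)
    (hint : ∀ i j, ∃ z : ℤ, L i j = (z : ℝ))
    (hbd : ∀ i j, |L i j| ≤ (U : ℝ))
    (hinv : IsUnit L)
    (S : Finset (Fin n)) (hS : S.Nonempty)
    (LS : Matrix {x // x ∈ S} {x // x ∈ S} ℝ)
    (hLS : LS = L.submatrix (fun a : {x // x ∈ S} => (a : Fin n)) (fun a : {x // x ∈ S} => (a : Fin n))) :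
    IsUnit LS ∧
      ∀ i j : {x // x ∈ S},
        LS⁻¹ i j ≤ L⁻¹ (i : Fin n) (j : Fin n) ∧
        ∀ d : ℝ, ((n : ℝ) * U) ^ ((2 : ℝ) - d) ≤ LS⁻¹ i j →
          ((n : ℝ) * U) ^ ((2 : ℝ) - d) ≤ L⁻¹ (i : Fin n) (j : Fin n) := by
  subst hLS
  -- L is positive semidefinite
  have hPSD : L.PosSemidef := sddm_posSemidef L hsymm hdd
  -- L is positive definite
  have hPD : L.PosDef := by
    refine Matrix.PosDef.of_dotProduct_mulVec_pos (Matrix.posSemidef_iff_dotProduct_mulVec.mp hPSD).1 (fun x hx => ?_)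
    rcases lt_or_eq_of_le (hPSD.dotProduct_mulVec_nonneg x) with h | h
    · exact h
    · exfalso
      have h0 : L *ᵥ x = 0 := (hPSD.dotProduct_mulVec_zero_iff x).mp h.symm
      have hinj := Matrix.mulVec_injective_iff_isUnit.mpr hinv
      exact hx (hinj (by rw [h0, Matrix.mulVec_zero]))
  have hdetL : IsUnit L.det := hPD.det_pos.ne'.isUnit
  -- coercion is injective
  have hcoe : Function.Injective (fun a : {x // x ∈ S} => (a : Fin n)) := Subtype.coe_injective
  -- the submatrix is positive definite
  have hLSpd : (L.submatrix (fun a : {x // x ∈ S} => (a : Fin n))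
      (fun a : {x // x ∈ S} => (a : Fin n))).PosDef := by
    refine Matrix.PosDef.of_dotProduct_mulVec_pos ((Matrix.posDef_iff_dotProduct_mulVec.mp hPD).1.submatrix _) (fun y hy => ?_)
    set y' : Fin n → ℝ := fun k => if h : k ∈ S then y ⟨k, h⟩ else 0 with hy'def
    have hy'ne : y' ≠ 0 := by
      obtain ⟨a, ha⟩ := Function.ne_iff.mp hy
      intro h0
      have h1 : y' ↑a = 0 := by rw [h0]; rfl
      rw [hy'def] at h1
      simp only [dif_pos a.2, Subtype.eta] at h1
      exact ha h1
    have hform : y ⬝ᵥ ((L.submatrix (fun a : {x // x ∈ S} => (a : Fin n)) (fun a : {x // x ∈ S} => (a : Fin n))) *ᵥ y) = y' ⬝ᵥ (L *ᵥ y') := by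
      have e1 : ∀ a : Fin n, (L *ᵥ y') a = ∑ b : {x // x ∈ S}, L a ↑b * y b :=
        fun a => sum_extend_finset S (fun k => L a k) y
      show (∑ a : {x // x ∈ S}, y a * ∑ b : {x // x ∈ S}, L ↑a ↑b * y b)
          = ∑ k, y' k * (L *ᵥ y') k
      calc (∑ a : {x // x ∈ S}, y a * ∑ b : {x // x ∈ S}, L ↑a ↑b * y b)
          = ∑ a : {x // x ∈ S}, (L *ᵥ y') ↑a * y a := by
            apply Finset.sum_congr rfl
            intro a _
            rw [e1 ↑a]
            ring
        _ = ∑ k, (L *ᵥ y') k * (if h : k ∈ S then y ⟨k, h⟩ else 0) :=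
            (sum_extend_finset S (fun k => (L *ᵥ y') k) y).symm
        _ = ∑ k, y' k * (L *ᵥ y') k := by
            apply Finset.sum_congr rfl
            intro k _
            rw [hy'def]
            ring
    rw [star_trivial, hform]
    have := hPD.dotProduct_mulVec_pos hy'ne
    rwa [star_trivial] at this
  have hdetLS : IsUnit (L.submatrix (fun a : {x // x ∈ S} => (a : Fin n))
      (fun a : {x // x ∈ S} => (a : Fin n))).det := hLSpd.det_pos.ne'.isUnit
  refine ⟨(Matrix.isUnit_iff_isUnit_det _).mpr hdetLS, ?_⟩
  set A := L.submatrix (fun a : {x // x ∈ S} => (a : Fin n))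
      (fun a : {x // x ∈ S} => (a : Fin n)) with hAdef
  have hoffA : ∀ a b : {x // x ∈ S}, a ≠ b → A a b ≤ 0 := by
    intro a b hab
    exact hoff ↑a ↑b (fun h => hab (Subtype.coe_injective h))
  have hLinv_nn : ∀ a b, 0 ≤ L⁻¹ a b := stieltjes_inv_nonneg L hPD hoff
  have hAinv_nn : ∀ a b, 0 ≤ A⁻¹ a b := stieltjes_inv_nonneg A hLSpd hoffA
  intro i j
  have hmain : A⁻¹ i j ≤ L⁻¹ ↑i ↑j := by
    set x : Fin n → ℝ := fun k => L⁻¹ k ↑j with hxdef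
    set y : {x // x ∈ S} → ℝ := fun a => A⁻¹ a j with hydef
    set y' : Fin n → ℝ := fun k => if h : k ∈ S then y ⟨k, h⟩ else 0 with hy'def
    set z : Fin n → ℝ := fun k => x k - y' k with hzdef
    have hLx : ∀ a, (L *ᵥ x) a = if a = (↑j : Fin n) then 1 else 0 := by
      intro a
      have h1 : (L *ᵥ x) a = (L * L⁻¹) a ↑j := by
        simp [Matrix.mulVec, Matrix.mul_apply, dotProduct, hxdef]
      rw [h1, Matrix.mul_nonsing_inv _ hdetL, Matrix.one_apply]
    have hLy' : ∀ a, (L *ᵥ y') a = ∑ b : {x // x ∈ S}, L a ↑b * y b := by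
      intro a
      exact sum_extend_finset S (fun k => L a k) y
    have hAy : ∀ a : {x // x ∈ S}, ∑ b : {x // x ∈ S}, L ↑a ↑b * y b
        = if a = j then 1 else 0 := by
      intro a
      have h1 : ∑ b : {x // x ∈ S}, L ↑a ↑b * y b = (A * A⁻¹) a j := by
        simp [hAdef, Matrix.mul_apply, Matrix.submatrix_apply, hydef]
      rw [h1, Matrix.mul_nonsing_inv _ hdetLS, Matrix.one_apply]
    have hLz : ∀ a, 0 ≤ (L *ᵥ z) a := by
      intro a
      have hsub : (L *ᵥ z) a = (L *ᵥ x) a - (L *ᵥ y') a := by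
        rw [show z = x - y' from rfl, Matrix.mulVec_sub]
        rfl
      rw [hsub, hLx a, hLy' a]
      by_cases haS : a ∈ S
      · rw [hAy ⟨a, haS⟩]
        have : (a = (↑j : Fin n)) ↔ ((⟨a, haS⟩ : {x // x ∈ S}) = j) := by
          constructor
          · intro h; exact Subtype.ext h
          · intro h; exact congrArg Subtype.val h
        simp only [this]
        exact le_of_eq (by rw [sub_self])
      · have h0 : (if a = (↑j : Fin n) then (1:ℝ) else 0) = 0 := by
          rw [if_neg]; intro h; exact haS (h ▸ j.2)
        rw [h0, zero_sub, neg_nonneg]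
        apply Finset.sum_nonpos
        intro b _
        exact mul_nonpos_of_nonpos_of_nonneg
          (hoff a ↑b (fun h => haS (h ▸ b.2))) (hAinv_nn b j)
    have hz_eq : z = L⁻¹ *ᵥ (L *ᵥ z) := by
      rw [Matrix.mulVec_mulVec, Matrix.nonsing_inv_mul _ hdetL, Matrix.one_mulVec]
    have hz_nn : 0 ≤ z ↑i := by
      rw [hz_eq]
      rw [show (L⁻¹ *ᵥ (L *ᵥ z)) ↑i = ∑ k, L⁻¹ ↑i k * (L *ᵥ z) k from rfl]
      apply Finset.sum_nonneg
      intro k _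
      exact mul_nonneg (hLinv_nn ↑i k) (hLz k)
    have : z ↑i = L⁻¹ ↑i ↑j - A⁻¹ i j := by
      rw [hzdef]
      simp only [hy'def, dif_pos i.2, Subtype.eta]
      rfl
    linarith [this ▸ hz_nn]
  exact ⟨hmain, fun d hd => le_trans hd hmain⟩
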